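/- Conjugation by a Heisenberg–Weyl operator translates the phase space: for all a, u ∈ ZMod d × ZMod d, T_a * A_u * T_aᴴ = A_(u + a). -/
import Mathlib


open Matrix Complex

/-- ω = exp(2πi/d). -/
noncomputable def omegaC (d : ℕ) : ℂ := Complex.exp (2 * Real.pi * Complex.I / d)

/-- The clock matrix `Z`, with `Z x x = ω ^ x.val`. -/
noncomputable def Zmat (d : ℕ) : Matrix (ZMod d) (ZMod d) ℂ :=
  Matrix.diagonal (fun x => omegaC d ^ x.val)

/-- The shift matrix `X`, with `X x y = 1` iff `x = y + 1`. -/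
noncomputable def Xmat (d : ℕ) : Matrix (ZMod d) (ZMod d) ℂ :=
  Matrix.of fun x y => if x = y + 1 then 1 else 0

/-- The Heisenberg–Weyl operator `T_a`. -/
noncomputable def TW (d : ℕ) [NeZero d] (a : ZMod d × ZMod d) : Matrix (ZMod d) (ZMod d) ℂ :=
  omegaC d ^ ((-((2 : ZMod d)⁻¹ * a.1 * a.2)).val) • (Zmat d ^ a.1.val * Xmat d ^ a.2.val)

/-- The phase point operator at the origin, `A_0 = (1/d) • ∑ a, T_a`. -/
noncomputable def Apoint0 (d : ℕ) [NeZero d] : Matrix (ZMod d) (ZMod d) ℂ :=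
  (1 / (d : ℂ)) • ∑ a : ZMod d × ZMod d, TW d a

/-- The phase point operator `A_u = T_u * A_0 * T_uᴴ`. -/
noncomputable def Apoint (d : ℕ) [NeZero d] (u : ZMod d × ZMod d) : Matrix (ZMod d) (ZMod d) ℂ :=
  TW d u * Apoint0 d * (TW d u)ᴴ

lemma omega_mul_conj (d : ℕ) [NeZero d] :
    omegaC d * (starRingEnd ℂ) (omegaC d) = 1 := by
  rw [omegaC, ← Complex.exp_conj, ← Complex.exp_add]
  have : (starRingEnd ℂ) (2 * Real.pi * Complex.I / d) = -(2 * Real.pi * Complex.I / d) := by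
    simp [map_div₀, Complex.conj_I, map_ofNat]
    ring
  rw [this, add_neg_cancel, Complex.exp_zero]

lemma omega_pow_d (d : ℕ) [NeZero d] : omegaC d ^ d = 1 := by
  have hd : (d : ℂ) ≠ 0 := Nat.cast_ne_zero.mpr (NeZero.ne d)
  rw [omegaC, ← Complex.exp_nat_mul, ← Complex.exp_two_pi_mul_I]
  congr 1
  field_simp

lemma omega_pow_eq (d : ℕ) [NeZero d] {m n : ℕ} (h : (m : ZMod d) = n) :
    omegaC d ^ m = omegaC d ^ n := by
  have hmod : m % d = n % d := (ZMod.natCast_eq_natCast_iff m n d).mp h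
  have key : ∀ k : ℕ, omegaC d ^ k = omegaC d ^ (k % d) := by
    intro k
    conv_lhs => rw [← Nat.mod_add_div k d]
    rw [pow_add, pow_mul, omega_pow_d, one_pow, mul_one]
  rw [key m, key n, hmod]

lemma Xpow_apply (d : ℕ) [NeZero d] (n : ℕ) (x y : ZMod d) :
    (Xmat d ^ n) x y = if x = y + (n : ZMod d) then 1 else 0 := by
  induction n generalizing y with
  | zero => simp [Matrix.one_apply]
  | succ n ih =>
    rw [pow_succ, Matrix.mul_apply]
    rw [Finset.sum_eq_single (y + 1)]
    · rw [ih]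
      simp only [Xmat, Matrix.of_apply, if_pos rfl, mul_one]
      push_cast
      by_cases h : x = y + 1 + (n : ZMod d)
      · rw [if_pos h, if_pos (by rw [h]; ring)]; norm_num
      · rw [if_neg h, if_neg (fun hc => h (by rw [hc]; ring))]; norm_num
    · intro b _ hb
      simp only [Xmat, Matrix.of_apply]
      rw [if_neg (fun hc => hb (by rw [hc])), mul_zero]
    · simp

lemma TW_apply (d : ℕ) [NeZero d] (a : ZMod d × ZMod d) (x y : ZMod d) :
    TW d a x y = if x = y + a.2 then
      omegaC d ^ ((-((2 : ZMod d)⁻¹ * a.1 * a.2)).val + a.1.val * x.val) else 0 := by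
  rw [TW, Matrix.smul_apply, Zmat, Matrix.diagonal_pow, Matrix.diagonal_mul, Xpow_apply]
  rw [ZMod.natCast_val, ZMod.cast_id]
  by_cases h : x = y + a.2
  · rw [if_pos h, if_pos h]
    simp only [Pi.pow_apply, mul_one, smul_eq_mul, pow_add, ← pow_mul]
    ring
  · rw [if_neg h, if_neg h]
    simp

lemma two_mul_inv (d : ℕ) (hodd : Odd d) : (2 : ZMod d) * (2 : ZMod d)⁻¹ = 1 := by
  apply ZMod.mul_inv_of_unit
  have h : Nat.Coprime 2 d := Nat.coprime_two_left.mpr hodd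
  have := (ZMod.isUnit_iff_coprime 2 d).mpr h
  simpa using this

lemma TW_mul (d : ℕ) [NeZero d] (hodd : Odd d) (a u : ZMod d × ZMod d) :
    TW d a * TW d u =
      omegaC d ^ (((2 : ZMod d)⁻¹ * (a.1 * u.2 - u.1 * a.2)).val) • TW d (u + a) := by
  ext x y
  rw [Matrix.mul_apply, Matrix.smul_apply, TW_apply]
  rw [Finset.sum_eq_single (y + u.2)]
  · rw [TW_apply, TW_apply, if_pos rfl]
    have hsnd : (u + a).2 = u.2 + a.2 := rfl
    by_cases h : x = y + u.2 + a.2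
    · rw [if_pos h, if_pos (by rw [h, hsnd]; ring)]
      rw [smul_eq_mul, ← pow_add, ← pow_add]
      apply omega_pow_eq
      push_cast [ZMod.natCast_val, ZMod.cast_id]
      subst h
      simp only [Prod.fst_add, Prod.snd_add]
      have h2 := two_mul_inv d hodd
      linear_combination (u.1 * a.2) * h2
    · rw [if_neg h, if_neg (fun hc => h (by rw [hc, hsnd]; ring)), zero_mul, smul_zero]
  · intro b _ hb
    rw [TW_apply d u]
    rw [if_neg (fun hc => hb (by rw [hc])), mul_zero]
  · simp

/-- Conjugation by a Heisenberg–Weyl operator translates the phase space. -/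
theorem heisenberg_weyl_translates_phase_space (d : ℕ) [NeZero d] (hodd : Odd d) (hd : 1 < d)
    (a u : ZMod d × ZMod d) :
    TW d a * Apoint d u * (TW d a)ᴴ = Apoint d (u + a) := by
  have hmul := TW_mul d hodd a u
  set k := (((2 : ZMod d)⁻¹ * (a.1 * u.2 - u.1 * a.2)).val) with hk
  have hc : omegaC d ^ k * (starRingEnd ℂ) (omegaC d ^ k) = 1 := by
    rw [map_pow, ← mul_pow, omega_mul_conj, one_pow]
  have expand : TW d a * (TW d u * Apoint0 d * (TW d u)ᴴ) * (TW d a)ᴴ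
      = (TW d a * TW d u) * Apoint0 d * (TW d a * TW d u)ᴴ := by
    rw [Matrix.conjTranspose_mul]
    noncomm_ring
  rw [Apoint, Apoint, expand, hmul, Matrix.conjTranspose_smul, Matrix.smul_mul,
    Matrix.smul_mul, Matrix.mul_smul, smul_smul]
  rw [show star (omegaC d ^ k) = (starRingEnd ℂ) (omegaC d ^ k) from rfl, hc, one_smul]
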